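/- arXiv:0802.1593 — 2 statements merged into one kernel-verified Lean document; each statement's English description precedes it below -/
import Mathlib

section
/- Let $2 \le p < \infty$, $(\Omega,\mu)$ a probability space, and $f_1,\dots,f_n \in L_p(\Omega)$ independent mean-zero random variables. Then there is a constant $c_p$ depending only on $p$ such that $\frac{1}{c_p} \max\{ (\sum_{k=1}^n \|f_k\|_p^p)^{1/p}, (\sum_{k=1}^n \|f_k\|_2^2)^{1/2} \} \le \| \sum_{k=1}^n f_k \|_p \le c_p \max\{ (\sum_{k=1}^n \|f_k\|_p^p)^{1/p}, (\sum_{k=1}^n \|f_k\|_2^2)^{1/2} \}$. -/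
open MeasureTheory ProbabilityTheory Real

private lemma ros_exp_quad {x : ℝ} (hx : |x| ≤ 1) : Real.exp x ≤ 1 + x + x^2 := by
  have h := Real.exp_bound hx (n := 2) (by norm_num)
  simp [Finset.sum_range_succ] at h
  have h2 := (abs_le.1 h).2
  nlinarith [sq_nonneg x]

private lemma ros_bernoulli_sq {p : ℝ} (hp : 2 ≤ p) (t : ℝ) :
    1 + p * t + (p/2) * t^2 ≤ |1 + t| ^ p := by
  have hs : (-1 : ℝ) ≤ 2*t + t^2 := by nlinarith [sq_nonneg (1+t)]
  have hb := one_add_mul_self_le_rpow_one_add hs (by linarith : (1:ℝ) ≤ p/2)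
  have h1 : (1 + (2*t+t^2)) = (1+t)^2 := by ring
  rw [h1] at hb
  have h2 : ((1+t)^2 : ℝ)^(p/2) = |1+t|^p := by
    rw [← sq_abs, ← Real.rpow_natCast |1+t| 2, ← Real.rpow_mul (abs_nonneg _)]
    congr 1
    ring
  rw [h2] at hb
  nlinarith [hb]

private lemma ros_lower_t {p : ℝ} (hp : 2 ≤ p) (t : ℝ) :
    1 + p * t + (2:ℝ)^(-p) * |t|^p ≤ |1 + t| ^ p := by
  have hp0 : (0:ℝ) < p := by linarith
  by_cases h2 : |t| ≤ 2
  · have hq := ros_bernoulli_sq hp t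
    have hle : (2:ℝ)^(-p) * |t|^p ≤ (p/2) * t^2 := by
      by_cases ht0 : t = 0
      · simp [ht0, Real.zero_rpow (ne_of_gt hp0)]
      · have htpos : 0 < |t| := abs_pos.2 ht0
        have e1 : |t|^p = |t|^(p-2) * |t|^(2:ℝ) := by
          rw [← Real.rpow_add htpos]; ring_nf
        have e2 : |t|^(2:ℝ) = t^2 := by
          rw [Real.rpow_two, sq_abs]
        have e3 : |t|^(p-2) ≤ (2:ℝ)^(p-2) :=
          Real.rpow_le_rpow (abs_nonneg _) h2 (by linarith)
        have e4 : (2:ℝ)^(-p) * (2:ℝ)^(p-2) = 1/4 := by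
          rw [← Real.rpow_add (by norm_num : (0:ℝ) < 2),
            show -p + (p-2) = ((-2:ℤ):ℝ) by push_cast; ring, Real.rpow_intCast]
          norm_num
        have e6 : (0:ℝ) < (2:ℝ)^(-p) := Real.rpow_pos_of_pos (by norm_num) _
        rw [e1, e2]
        calc (2:ℝ)^(-p) * (|t|^(p-2) * t^2) ≤ (2:ℝ)^(-p) * ((2:ℝ)^(p-2) * t^2) := by
              have := sq_nonneg t
              apply mul_le_mul_of_nonneg_left _ (le_of_lt e6)
              exact mul_le_mul_of_nonneg_right e3 this
          _ = (1/4) * t^2 := by rw [← mul_assoc, e4]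
          _ ≤ (p/2) * t^2 := by nlinarith [sq_nonneg t]
    linarith
  · push_neg at h2
    have h2p : (2:ℝ)^(-p) ≤ 1 :=
      Real.rpow_le_one_of_one_le_of_nonpos (by norm_num) (by linarith)
    rcases le_or_gt t 0 with ht | ht
    · -- t < -2
      have htlt : t < -2 := by
        rcases abs_cases t with ⟨h, _⟩ | ⟨h, _⟩ <;> linarith
      have habs : |t| = -t := abs_of_neg (by linarith)
      have h1t : |1 + t| = -(1+t) := abs_of_neg (by linarith)
      have hhalf : |t|/2 ≤ |1+t| := by rw [habs, h1t]; linarith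
      have hr : (|t|/2)^p ≤ |1+t|^p :=
        Real.rpow_le_rpow (by positivity) hhalf (le_of_lt hp0)
      have hdiv : (|t|/2)^p = (2:ℝ)^(-p) * |t|^p := by
        rw [Real.div_rpow (abs_nonneg _) (by norm_num), Real.rpow_neg (by norm_num)]
        ring
      have hneg : 1 + p * t ≤ 0 := by nlinarith
      rw [hdiv] at hr; linarith
    · -- t > 2
      have ht2 : 2 < t := by rwa [abs_of_pos ht] at h2
      have habs : |t| = t := abs_of_pos ht
      have h1t : |1+t| = 1+t := abs_of_pos (by linarith)
      have htpos : (0:ℝ) < t := ht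
      have b1 : t^p + p * t^(p-1) ≤ (1+t)^p := by
        have hu : (0:ℝ) < 1/t := by positivity
        have hber := one_add_mul_self_le_rpow_one_add
          (by linarith : (-1:ℝ) ≤ 1/t) (by linarith : (1:ℝ) ≤ p)
        have hmul : ((t * (1 + 1/t)) : ℝ)^p = t^p * (1+1/t)^p :=
          Real.mul_rpow (le_of_lt htpos) (by positivity)
        have hid : t * (1 + 1/t) = 1 + t := by field_simp; ring
        have hts : t^p * (1/t) = t^(p-1) := by
          rw [Real.rpow_sub htpos, Real.rpow_one]; ring
        calc t^p + p * t^(p-1) = t^p * (1 + p * (1/t)) := by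
              rw [mul_add, mul_one, ← mul_assoc, mul_comm (t^p) p, mul_assoc, hts]
          _ ≤ t^p * (1+1/t)^p := by
              apply mul_le_mul_of_nonneg_left hber (Real.rpow_nonneg (le_of_lt htpos) _)
          _ = (1+t)^p := by rw [← hmul, hid]
      have b2 : t ≤ t^(p-1) := by
        nth_rewrite 1 [← Real.rpow_one t]
        exact Real.rpow_le_rpow_of_exponent_le (by linarith) (by linarith)
      have b3 : 1 + (2:ℝ)^(-p) * t^p ≤ t^p := by
        have ht2p : (2:ℝ)^p ≤ t^p := Real.rpow_le_rpow (by norm_num) (le_of_lt ht2) (le_of_lt hp0)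
        have h2ge : (2:ℝ) ≤ (2:ℝ)^p := by
          nth_rewrite 1 [← Real.rpow_one 2]
          exact Real.rpow_le_rpow_of_exponent_le (by norm_num) (by linarith)
        have hinv : (2:ℝ)^(-p) * (2:ℝ)^p = 1 := by
          rw [← Real.rpow_add (by norm_num)]; simp
        have h2pn : (0:ℝ) < (2:ℝ)^(-p) := Real.rpow_pos_of_pos (by norm_num) _
        nlinarith
      rw [habs, h1t]
      have := mul_le_mul_of_nonneg_left b2 (le_of_lt hp0)
      linarith

private lemma ros_lower {p : ℝ} (hp : 2 ≤ p) (a b : ℝ) :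
    |a|^p + p * |a|^(p-2) * a * b + (2:ℝ)^(-p) * |b|^p ≤ |a + b| ^ p := by
  have hp0 : (0:ℝ) < p := by linarith
  by_cases ha : a = 0
  · subst ha
    have h2p : (2:ℝ)^(-p) ≤ 1 :=
      Real.rpow_le_one_of_one_le_of_nonpos (by norm_num) (by linarith)
    have hb : (0:ℝ) ≤ |b|^p := Real.rpow_nonneg (abs_nonneg _) _
    simp [Real.zero_rpow (ne_of_gt hp0)]
    nlinarith
  · have habs : (0:ℝ) < |a| := abs_pos.2 ha
    have e1 : |a + b| = |a| * |1 + b/a| := by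
      rw [← abs_mul]; congr 1; field_simp
    have e2 : |b| = |a| * |b/a| := by
      rw [← abs_mul]; congr 1; field_simp
    have e3 : p * |a|^(p-2) * a * b = p * (|a|^p * (b/a)) := by
      have h1 : a * b = |a|^(2:ℝ) * (b/a) := by
        rw [Real.rpow_two, sq_abs]; field_simp
      calc p * |a|^(p-2) * a * b = p * (|a|^(p-2) * (a*b)) := by ring
        _ = p * (|a|^(p-2) * (|a|^(2:ℝ) * (b/a))) := by rw [h1]
        _ = p * ((|a|^(p-2) * |a|^(2:ℝ)) * (b/a)) := by ring
        _ = p * (|a|^p * (b/a)) := by rw [← Real.rpow_add habs]; ring_nf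
    have key := ros_lower_t hp (b/a)
    have hKey := mul_le_mul_of_nonneg_left key (Real.rpow_nonneg (abs_nonneg a) p)
    rw [e1, e2, e3, Real.mul_rpow (abs_nonneg a) (abs_nonneg (b/a)),
      Real.mul_rpow (abs_nonneg a) (abs_nonneg _)]
    calc |a|^p + p * (|a|^p * (b/a)) + (2:ℝ)^(-p) * (|a|^p * |b/a|^p)
        = |a|^p * (1 + p*(b/a) + (2:ℝ)^(-p) * |b/a|^p) := by ring
      _ ≤ |a|^p * |1+b/a|^p := hKey

private lemma ros_D_ge : ∀ {p : ℝ}, 2 ≤ p → (1:ℝ) ≤ (p+1)^p + p^p + p^2 := by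
  intro p hp
  have h1 : (1:ℝ) ≤ (p+1)^p := Real.one_le_rpow (by linarith) (by linarith)
  have h2 : (0:ℝ) ≤ p^p := Real.rpow_nonneg (by linarith) _
  nlinarith

private lemma ros_upper_t {p : ℝ} (hp : 2 ≤ p) (t : ℝ) :
    |1 + t| ^ p ≤ 1 + p * t + ((p+1)^p + p^p + p^2) * (t^2 + |t|^p) := by
  have hp0 : (0:ℝ) < p := by linarith
  have hD1 : (1:ℝ) ≤ (p+1)^p := Real.one_le_rpow (by linarith) (by linarith)
  have hD2 : (0:ℝ) ≤ p^p := Real.rpow_nonneg (by linarith) _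
  have htp : (0:ℝ) ≤ |t|^p := Real.rpow_nonneg (abs_nonneg _) _
  by_cases hcase : |t| ≤ 1/p
  · have ht1 : |t| ≤ 1/2 := le_trans hcase (by rw [div_le_div_iff₀ hp0 two_pos]; linarith)
    have htlb := (abs_le.1 ht1).1
    have h1tpos : (0:ℝ) < 1 + t := by linarith
    have c1 : |1+t|^p = (1+t)^p := by rw [abs_of_pos h1tpos]
    have c2 : (1+t)^p ≤ Real.exp (t*p) := by
      calc (1+t)^p ≤ (Real.exp t)^p :=
            Real.rpow_le_rpow (le_of_lt h1tpos) (by linarith [Real.add_one_le_exp t]) (le_of_lt hp0)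
        _ = Real.exp (t*p) := by
            rw [Real.rpow_def_of_pos (Real.exp_pos t), Real.log_exp]
    have hx : |t*p| ≤ 1 := by
      rw [abs_mul, abs_of_pos hp0]
      calc |t| * p ≤ (1/p) * p := mul_le_mul_of_nonneg_right hcase (le_of_lt hp0)
        _ = 1 := by field_simp
    have c3 : Real.exp (t*p) ≤ 1 + t*p + (t*p)^2 := ros_exp_quad hx
    rw [c1]
    have hsq : (t*p)^2 = p^2 * t^2 := by ring
    nlinarith [sq_nonneg t]
  · push_neg at hcase
    have h1p : 1 ≤ p * |t| := by
      rw [div_lt_iff₀ hp0] at hcase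
      nlinarith
    have d2 : |1+t|^p ≤ (p+1)^p * |t|^p := by
      have hd : |1+t| ≤ (p+1) * |t| := by
        calc |1+t| ≤ 1 + |t| := by
              have := abs_add_le (1:ℝ) t; simpa using this
          _ ≤ p * |t| + |t| := by linarith
          _ = (p+1) * |t| := by ring
      calc |1+t|^p ≤ ((p+1) * |t|)^p :=
            Real.rpow_le_rpow (abs_nonneg _) hd (le_of_lt hp0)
        _ = (p+1)^p * |t|^p := Real.mul_rpow (by linarith) (abs_nonneg _)
    have d3 : p * |t| ≤ p^p * |t|^p := by
      have : (p * |t|) ≤ (p * |t|)^p := by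
        nth_rewrite 1 [← Real.rpow_one (p * |t|)]
        exact Real.rpow_le_rpow_of_exponent_le h1p (by linarith)
      calc p * |t| ≤ (p*|t|)^p := this
        _ = p^p * |t|^p := Real.mul_rpow (le_of_lt hp0) (abs_nonneg _)
    have hmid : -(p * t) ≤ p^p * |t|^p := by
      have : -(p*t) ≤ p * |t| := by
        rw [← mul_neg]
        exact mul_le_mul_of_nonneg_left (neg_le_abs t) (le_of_lt hp0)
      linarith
    nlinarith [sq_nonneg t]

private lemma ros_upper {p : ℝ} (hp : 2 ≤ p) (a b : ℝ) :
    |a + b| ^ p ≤ |a|^p + p * |a|^(p-2) * a * b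
      + ((p+1)^p + p^p + p^2) * (|a|^(p-2) * b^2 + |b|^p) := by
  have hp0 : (0:ℝ) < p := by linarith
  have hD := ros_D_ge hp
  by_cases ha : a = 0
  · subst ha
    have hb : (0:ℝ) ≤ |b|^p := Real.rpow_nonneg (abs_nonneg _) _
    have hb2 : (0:ℝ) ≤ |(0:ℝ)|^(p-2) * b^2 := by positivity
    simp only [zero_add, mul_zero, zero_mul, add_zero]
    have h0 : |(0:ℝ)|^p = 0 := by
      simp [Real.zero_rpow (ne_of_gt hp0)]
    rw [h0]
    nlinarith
  · have habs : (0:ℝ) < |a| := abs_pos.2 ha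
    have e1 : |a + b| = |a| * |1 + b/a| := by
      rw [← abs_mul]; congr 1; field_simp
    have e2 : |b| = |a| * |b/a| := by
      rw [← abs_mul]; congr 1; field_simp
    have e3 : p * |a|^(p-2) * a * b = p * (|a|^p * (b/a)) := by
      have h1 : a * b = |a|^(2:ℝ) * (b/a) := by
        rw [Real.rpow_two, sq_abs]; field_simp
      calc p * |a|^(p-2) * a * b = p * (|a|^(p-2) * (a*b)) := by ring
        _ = p * (|a|^(p-2) * (|a|^(2:ℝ) * (b/a))) := by rw [h1]
        _ = p * ((|a|^(p-2) * |a|^(2:ℝ)) * (b/a)) := by ring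
        _ = p * (|a|^p * (b/a)) := by rw [← Real.rpow_add habs]; ring_nf
    have e4 : |a|^(p-2) * b^2 = |a|^p * (b/a)^2 := by
      have h1 : b^2 = |a|^(2:ℝ) * (b/a)^2 := by
        rw [Real.rpow_two, sq_abs]; field_simp
      calc |a|^(p-2) * b^2 = |a|^(p-2) * (|a|^(2:ℝ) * (b/a)^2) := by rw [h1]
        _ = (|a|^(p-2) * |a|^(2:ℝ)) * (b/a)^2 := by ring
        _ = |a|^p * (b/a)^2 := by rw [← Real.rpow_add habs]; ring_nf
    have key := ros_upper_t hp (b/a)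
    have hKey := mul_le_mul_of_nonneg_left key (Real.rpow_nonneg (abs_nonneg a) p)
    rw [e1, e2, e3, e4, Real.mul_rpow (abs_nonneg a) (abs_nonneg (b/a)),
      Real.mul_rpow (abs_nonneg a) (abs_nonneg _)]
    calc |a|^p * |1+b/a|^p
        ≤ |a|^p * (1 + p*(b/a) + ((p+1)^p + p^p + p^2) * ((b/a)^2 + |b/a|^p)) := hKey
      _ = |a|^p + p * (|a|^p * (b/a))
          + ((p+1)^p + p^p + p^2) * (|a|^p * (b/a)^2 + |a|^p * |b/a|^p) := by ring

section MeasurePart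
variable {Ω : Type} [MeasurableSpace Ω] {μ : Measure Ω} [IsProbabilityMeasure μ] {p : ℝ}

private lemma ros_cont_rpow {q : ℝ} (hq : 0 ≤ q) : Continuous (fun x : ℝ => |x| ^ q) :=
  (Real.continuous_rpow_const hq).comp continuous_abs

private lemma ros_int_rpow_le {X : Ω → ℝ} (hX : Measurable X)
    (hint : Integrable (fun ω => |X ω| ^ p) μ)
    {q : ℝ} (hq0 : 0 ≤ q) (hqp : q ≤ p) : Integrable (fun ω => |X ω| ^ q) μ := by
  refine Integrable.mono' ((integrable_const (1:ℝ)).add hint)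
    ((ros_cont_rpow hq0).measurable.comp hX).aestronglyMeasurable
    (Filter.Eventually.of_forall fun ω => ?_)
  have h1 : ‖|X ω| ^ q‖ = |X ω| ^ q := by
    rw [Real.norm_eq_abs, abs_of_nonneg (Real.rpow_nonneg (abs_nonneg _) _)]
  rw [h1]
  rcases le_or_gt (|X ω|) 1 with h | h
  · have : |X ω| ^ q ≤ 1 := Real.rpow_le_one (abs_nonneg _) h hq0
    have h2 : (0:ℝ) ≤ |X ω| ^ p := Real.rpow_nonneg (abs_nonneg _) _
    simp only [Pi.add_apply]; linarith
  · have : |X ω| ^ q ≤ |X ω| ^ p :=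
      Real.rpow_le_rpow_of_exponent_le (le_of_lt h) hqp
    simp only [Pi.add_apply]; linarith

private lemma ros_int_abs_rpow (hp : 2 ≤ p) {X : Ω → ℝ}
    (hmX : MemLp X (ENNReal.ofReal p) μ) :
    Integrable (fun ω => |X ω| ^ p) μ := by
  have h := hmX.integrable_norm_rpow (by simp [ENNReal.ofReal_eq_zero]; linarith)
    ENNReal.ofReal_ne_top
  simpa [Real.norm_eq_abs, ENNReal.toReal_ofReal (by linarith : (0:ℝ) ≤ p)] using h

private lemma ros_repr (hp : 2 ≤ p) {X : Ω → ℝ} (hmX : MemLp X (ENNReal.ofReal p) μ) :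
    (eLpNorm X (ENNReal.ofReal p) μ).toReal = (∫ ω, |X ω| ^ p ∂μ) ^ (1/p) := by
  rw [hmX.eLpNorm_eq_integral_rpow_norm (by simp [ENNReal.ofReal_eq_zero]; linarith)
    ENNReal.ofReal_ne_top]
  rw [ENNReal.toReal_ofReal]
  · simp [Real.norm_eq_abs, ENNReal.toReal_ofReal (by linarith : (0:ℝ) ≤ p), one_div]
  · positivity

private lemma ros_repr_pow (hp : 2 ≤ p) {X : Ω → ℝ} (hmX : MemLp X (ENNReal.ofReal p) μ) :
    ((eLpNorm X (ENNReal.ofReal p) μ).toReal) ^ p = ∫ ω, |X ω| ^ p ∂μ := by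
  rw [ros_repr hp hmX, ← Real.rpow_mul
    (integral_nonneg fun ω => Real.rpow_nonneg (abs_nonneg _) _)]
  rw [show 1/p * p = 1 by field_simp, Real.rpow_one]

private lemma ros_lyap (hp : 2 ≤ p) {X : Ω → ℝ} (hX : Measurable X)
    (hmX : MemLp X (ENNReal.ofReal p) μ) :
    ∫ ω, |X ω| ^ (p-2) ∂μ ≤ (∫ ω, |X ω| ^ p ∂μ) ^ ((p-2)/p) := by
  rcases eq_or_lt_of_le hp with heq | hlt
  · subst heq
    simp [Real.rpow_zero]
  · have hr0 : (0:ℝ) < p - 2 := by linarith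
    have hp0 : (0:ℝ) < p := by linarith
    have hle : ENNReal.ofReal (p-2) ≤ ENNReal.ofReal p :=
      ENNReal.ofReal_le_ofReal (by linarith)
    have hmr : MemLp X (ENNReal.ofReal (p-2)) μ := hmX.mono_exponent hle
    have hnorm : (eLpNorm X (ENNReal.ofReal (p-2)) μ).toReal
        ≤ (eLpNorm X (ENNReal.ofReal p) μ).toReal :=
      ENNReal.toReal_mono hmX.eLpNorm_ne_top
        (eLpNorm_le_eLpNorm_of_exponent_le hle hX.aestronglyMeasurable)
    have e1 : (eLpNorm X (ENNReal.ofReal (p-2)) μ).toReal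
        = (∫ ω, |X ω| ^ (p-2) ∂μ) ^ (1/(p-2)) := by
      rw [hmr.eLpNorm_eq_integral_rpow_norm (by simp [ENNReal.ofReal_eq_zero]; linarith)
        ENNReal.ofReal_ne_top, ENNReal.toReal_ofReal (by positivity)]
      simp [Real.norm_eq_abs, ENNReal.toReal_ofReal (le_of_lt hr0), one_div]
    have e2 := ros_repr hp hmX
    rw [e1, e2] at hnorm
    have hIr : (0:ℝ) ≤ ∫ ω, |X ω| ^ (p-2) ∂μ :=
      integral_nonneg fun ω => Real.rpow_nonneg (abs_nonneg _) _
    calc ∫ ω, |X ω| ^ (p-2) ∂μ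
        = ((∫ ω, |X ω| ^ (p-2) ∂μ) ^ (1/(p-2))) ^ (p-2) := by
          rw [← Real.rpow_mul hIr, show 1/(p-2) * (p-2) = 1 by field_simp, Real.rpow_one]
      _ ≤ ((∫ ω, |X ω| ^ p ∂μ) ^ (1/p)) ^ (p-2) :=
          Real.rpow_le_rpow (Real.rpow_nonneg hIr _) hnorm (by linarith)
      _ = (∫ ω, |X ω| ^ p ∂μ) ^ ((p-2)/p) := by
          rw [← Real.rpow_mul (integral_nonneg fun ω => Real.rpow_nonneg (abs_nonneg _) _)]
          ring_nf

end MeasurePart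

section StepPart
variable {Ω : Type} [MeasurableSpace Ω] {μ : Measure Ω} [IsProbabilityMeasure μ] {p : ℝ}

private lemma ros_step_upper (hp : 2 ≤ p) {X Y : Ω → ℝ} (hX : Measurable X) (hY : Measurable Y)
    (hmX : MemLp X (ENNReal.ofReal p) μ) (hmY : MemLp Y (ENNReal.ofReal p) μ)
    (hind : IndepFun X Y μ) (hY0 : ∫ ω, Y ω ∂μ = 0) :
    ∫ ω, |X ω + Y ω| ^ p ∂μ ≤ ∫ ω, |X ω| ^ p ∂μ
      + ((p+1)^p + p^p + p^2) *
        ((∫ ω, |X ω| ^ p ∂μ) ^ ((p-2)/p) * (∫ ω, (Y ω)^2 ∂μ) + ∫ ω, |Y ω| ^ p ∂μ) := by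
  have hp0 : (0:ℝ) < p := by linarith
  set D := (p+1)^p + p^p + p^2 with hD
  have hD1 : (1:ℝ) ≤ D := ros_D_ge hp
  -- basic integrabilities
  have intXp : Integrable (fun ω => |X ω| ^ p) μ := ros_int_abs_rpow hp hmX
  have intYp : Integrable (fun ω => |Y ω| ^ p) μ := ros_int_abs_rpow hp hmY
  have intXYp : Integrable (fun ω => |X ω + Y ω| ^ p) μ := by
    have := ros_int_abs_rpow hp (hmX.add hmY)
    simpa using this
  have intY : Integrable Y μ := hmY.integrable (ENNReal.one_le_ofReal.2 (by linarith))
  have hmY2 : MemLp Y 2 μ := hmY.mono_exponent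
    (by rw [← ENNReal.ofReal_ofNat]; exact ENNReal.ofReal_le_ofReal hp)
  have intY2 : Integrable (fun ω => (Y ω)^2) μ := hmY2.integrable_sq
  -- the function g x = |x|^(p-2) * x and its properties
  have hgmeas : Measurable (fun x : ℝ => |x| ^ (p-2) * x) :=
    ((ros_cont_rpow (by linarith)).mul continuous_id).measurable
  have hameas : Measurable (fun x : ℝ => |x| ^ (p-2)) :=
    (ros_cont_rpow (by linarith)).measurable
  have hsqmeas : Measurable (fun x : ℝ => x ^ 2) := (continuous_pow 2).measurable
  have intgX : Integrable (fun ω => |X ω| ^ (p-2) * X ω) μ := by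
    refine Integrable.mono' (ros_int_rpow_le hX intXp (by linarith : (0:ℝ) ≤ p-1) (by linarith))
      (hgmeas.comp hX).aestronglyMeasurable (Filter.Eventually.of_forall fun ω => ?_)
    rw [Real.norm_eq_abs, abs_mul, abs_of_nonneg (Real.rpow_nonneg (abs_nonneg _) _)]
    rcases eq_or_ne (X ω) 0 with h | h
    · simp [h, Real.rpow_nonneg]
    · rw [show |X ω| ^ (p-2) * |X ω| = |X ω| ^ (p-1) by
        rw [show p - 1 = (p-2) + 1 by ring, Real.rpow_add_one (abs_ne_zero.2 h)]]
  have intaX : Integrable (fun ω => |X ω| ^ (p-2)) μ :=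
    ros_int_rpow_le hX intXp (by linarith) (by linarith)
  -- independence of composed functions
  have hindg : IndepFun (fun ω => |X ω| ^ (p-2) * X ω) Y μ := hind.comp hgmeas measurable_id
  have hinda : IndepFun (fun ω => |X ω| ^ (p-2)) (fun ω => (Y ω)^2) μ :=
    hind.comp hameas hsqmeas
  -- cross term vanishes
  have hcross : ∫ ω, |X ω| ^ (p-2) * X ω * Y ω ∂μ = 0 := by
    have h2 : ∫ ω, |X ω| ^ (p-2) * X ω * Y ω ∂μ
        = (∫ ω, |X ω| ^ (p-2) * X ω ∂μ) * ∫ ω, Y ω ∂μ :=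
      hindg.integral_mul_eq_mul_integral (hgmeas.comp hX).aestronglyMeasurable hY.aestronglyMeasurable
    rw [h2, hY0, mul_zero]
  -- second term factorizes
  have hsec : ∫ ω, |X ω| ^ (p-2) * (Y ω)^2 ∂μ
      = (∫ ω, |X ω| ^ (p-2) ∂μ) * ∫ ω, (Y ω)^2 ∂μ :=
    hinda.integral_mul_eq_mul_integral (hameas.comp hX).aestronglyMeasurable
      (hsqmeas.comp hY).aestronglyMeasurable
  have intcross : Integrable (fun ω => |X ω| ^ (p-2) * X ω * Y ω) μ := by
    have := hindg.integrable_mul intgX intY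
    exact this
  have intsec : Integrable (fun ω => |X ω| ^ (p-2) * (Y ω)^2) μ := by
    have := hinda.integrable_mul intaX intY2
    exact this
  -- pointwise bound and integrate
  have hpt : ∀ ω, |X ω + Y ω| ^ p ≤ |X ω| ^ p + p * (|X ω| ^ (p-2) * X ω * Y ω)
      + D * (|X ω| ^ (p-2) * (Y ω)^2 + |Y ω| ^ p) := by
    intro ω
    have := ros_upper hp (X ω) (Y ω)
    calc |X ω + Y ω| ^ p ≤ |X ω|^p + p * |X ω|^(p-2) * X ω * Y ω
        + D * (|X ω|^(p-2) * (Y ω)^2 + |Y ω|^p) := this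
      _ = |X ω| ^ p + p * (|X ω| ^ (p-2) * X ω * Y ω)
        + D * (|X ω| ^ (p-2) * (Y ω)^2 + |Y ω| ^ p) := by ring
  have intRHS : Integrable (fun ω => |X ω| ^ p + p * (|X ω| ^ (p-2) * X ω * Y ω)
      + D * (|X ω| ^ (p-2) * (Y ω)^2 + |Y ω| ^ p)) μ :=
    (intXp.add (intcross.const_mul p)).add ((intsec.add intYp).const_mul D)
  have hI := integral_mono intXYp intRHS hpt
  have i1 : Integrable (fun ω => |X ω| ^ p + p * (|X ω| ^ (p-2) * X ω * Y ω)) μ :=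
    intXp.add (intcross.const_mul p)
  have i2 : Integrable (fun ω => |X ω| ^ (p-2) * (Y ω)^2 + |Y ω| ^ p) μ :=
    intsec.add intYp
  have eA : ∫ ω, (|X ω| ^ p + p * (|X ω| ^ (p-2) * X ω * Y ω)
        + D * (|X ω| ^ (p-2) * (Y ω)^2 + |Y ω| ^ p)) ∂μ
      = (∫ ω, |X ω| ^ p + p * (|X ω| ^ (p-2) * X ω * Y ω) ∂μ)
        + ∫ ω, D * (|X ω| ^ (p-2) * (Y ω)^2 + |Y ω| ^ p) ∂μ :=
    integral_add i1 (i2.const_mul D)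
  have eB : ∫ ω, |X ω| ^ p + p * (|X ω| ^ (p-2) * X ω * Y ω) ∂μ
      = (∫ ω, |X ω| ^ p ∂μ) + ∫ ω, p * (|X ω| ^ (p-2) * X ω * Y ω) ∂μ :=
    integral_add intXp (intcross.const_mul p)
  have eC : ∫ ω, p * (|X ω| ^ (p-2) * X ω * Y ω) ∂μ
      = p * ∫ ω, |X ω| ^ (p-2) * X ω * Y ω ∂μ := integral_const_mul _ _
  have eD : ∫ ω, D * (|X ω| ^ (p-2) * (Y ω)^2 + |Y ω| ^ p) ∂μ
      = D * ∫ ω, (|X ω| ^ (p-2) * (Y ω)^2 + |Y ω| ^ p) ∂μ := integral_const_mul _ _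
  have eE : ∫ ω, (|X ω| ^ (p-2) * (Y ω)^2 + |Y ω| ^ p) ∂μ
      = (∫ ω, |X ω| ^ (p-2) * (Y ω)^2 ∂μ) + ∫ ω, |Y ω| ^ p ∂μ :=
    integral_add intsec intYp
  have hcross2 : ∫ ω, |X ω| ^ (p-2) * X ω * Y ω ∂μ = 0 := hcross
  rw [eA, eB, eC, eD, eE, hcross2, hsec] at hI
  have hlyap := ros_lyap hp hX hmX
  have hY2nn : (0:ℝ) ≤ ∫ ω, (Y ω)^2 ∂μ := integral_nonneg fun ω => sq_nonneg _
  have hmul : (∫ ω, |X ω| ^ (p-2) ∂μ) * (∫ ω, (Y ω)^2 ∂μ)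
      ≤ (∫ ω, |X ω| ^ p ∂μ) ^ ((p-2)/p) * (∫ ω, (Y ω)^2 ∂μ) :=
    mul_le_mul_of_nonneg_right hlyap hY2nn
  have hDmul := mul_le_mul_of_nonneg_left hmul (le_trans zero_le_one hD1)
  have hr1 : D * ((∫ ω, |X ω| ^ (p-2) ∂μ) * ∫ ω, (Y ω)^2 ∂μ + ∫ ω, |Y ω| ^ p ∂μ)
      = D * ((∫ ω, |X ω| ^ (p-2) ∂μ) * ∫ ω, (Y ω)^2 ∂μ) + D * ∫ ω, |Y ω| ^ p ∂μ := by ring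
  have hr2 : D * ((∫ ω, |X ω| ^ p ∂μ) ^ ((p-2)/p) * ∫ ω, (Y ω)^2 ∂μ + ∫ ω, |Y ω| ^ p ∂μ)
      = D * ((∫ ω, |X ω| ^ p ∂μ) ^ ((p-2)/p) * ∫ ω, (Y ω)^2 ∂μ) + D * ∫ ω, |Y ω| ^ p ∂μ := by
    ring
  rw [hr1] at hI
  rw [hr2]
  exact le_trans hI (by linarith [hDmul])

private lemma ros_step_lower (hp : 2 ≤ p) {X Y : Ω → ℝ} (hX : Measurable X) (hY : Measurable Y)
    (hmX : MemLp X (ENNReal.ofReal p) μ) (hmY : MemLp Y (ENNReal.ofReal p) μ)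
    (hind : IndepFun X Y μ) (hY0 : ∫ ω, Y ω ∂μ = 0) :
    ∫ ω, |X ω| ^ p ∂μ + (2:ℝ)^(-p) * ∫ ω, |Y ω| ^ p ∂μ ≤ ∫ ω, |X ω + Y ω| ^ p ∂μ := by
  have hp0 : (0:ℝ) < p := by linarith
  have intXp : Integrable (fun ω => |X ω| ^ p) μ := ros_int_abs_rpow hp hmX
  have intYp : Integrable (fun ω => |Y ω| ^ p) μ := ros_int_abs_rpow hp hmY
  have intXYp : Integrable (fun ω => |X ω + Y ω| ^ p) μ := by
    have := ros_int_abs_rpow hp (hmX.add hmY); simpa using this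
  have intY : Integrable Y μ := hmY.integrable (ENNReal.one_le_ofReal.2 (by linarith))
  have hgmeas : Measurable (fun x : ℝ => |x| ^ (p-2) * x) :=
    ((ros_cont_rpow (by linarith)).mul continuous_id).measurable
  have intgX : Integrable (fun ω => |X ω| ^ (p-2) * X ω) μ := by
    refine Integrable.mono' (ros_int_rpow_le hX intXp (by linarith : (0:ℝ) ≤ p-1) (by linarith))
      (hgmeas.comp hX).aestronglyMeasurable (Filter.Eventually.of_forall fun ω => ?_)
    rw [Real.norm_eq_abs, abs_mul, abs_of_nonneg (Real.rpow_nonneg (abs_nonneg _) _)]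
    rcases eq_or_ne (X ω) 0 with h | h
    · simp [h, Real.rpow_nonneg]
    · rw [show |X ω| ^ (p-2) * |X ω| = |X ω| ^ (p-1) by
        rw [show p - 1 = (p-2) + 1 by ring, Real.rpow_add_one (abs_ne_zero.2 h)]]
  have hindg : IndepFun (fun ω => |X ω| ^ (p-2) * X ω) Y μ := hind.comp hgmeas measurable_id
  have hcross : ∫ ω, |X ω| ^ (p-2) * X ω * Y ω ∂μ = 0 := by
    have h2 : ∫ ω, |X ω| ^ (p-2) * X ω * Y ω ∂μ
        = (∫ ω, |X ω| ^ (p-2) * X ω ∂μ) * ∫ ω, Y ω ∂μ :=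
      hindg.integral_mul_eq_mul_integral (hgmeas.comp hX).aestronglyMeasurable hY.aestronglyMeasurable
    rw [h2, hY0, mul_zero]
  have intcross : Integrable (fun ω => |X ω| ^ (p-2) * X ω * Y ω) μ := by
    have := hindg.integrable_mul intgX intY
    exact this
  have hpt : ∀ ω, |X ω| ^ p + p * (|X ω| ^ (p-2) * X ω * Y ω) + (2:ℝ)^(-p) * |Y ω| ^ p
      ≤ |X ω + Y ω| ^ p := by
    intro ω
    have := ros_lower hp (X ω) (Y ω)
    calc |X ω| ^ p + p * (|X ω| ^ (p-2) * X ω * Y ω) + (2:ℝ)^(-p) * |Y ω| ^ p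
        = |X ω|^p + p * |X ω|^(p-2) * X ω * Y ω + (2:ℝ)^(-p) * |Y ω|^p := by ring
      _ ≤ |X ω + Y ω| ^ p := this
  have intLHS : Integrable (fun ω => |X ω| ^ p + p * (|X ω| ^ (p-2) * X ω * Y ω)
      + (2:ℝ)^(-p) * |Y ω| ^ p) μ :=
    (intXp.add (intcross.const_mul p)).add (intYp.const_mul _)
  have hI := integral_mono intLHS intXYp hpt
  have eA : ∫ ω, (|X ω| ^ p + p * (|X ω| ^ (p-2) * X ω * Y ω)
        + (2:ℝ)^(-p) * |Y ω| ^ p) ∂μ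
      = (∫ ω, |X ω| ^ p + p * (|X ω| ^ (p-2) * X ω * Y ω) ∂μ)
        + ∫ ω, (2:ℝ)^(-p) * |Y ω| ^ p ∂μ :=
    integral_add (intXp.add (intcross.const_mul p)) (intYp.const_mul _)
  have eB : ∫ ω, |X ω| ^ p + p * (|X ω| ^ (p-2) * X ω * Y ω) ∂μ
      = (∫ ω, |X ω| ^ p ∂μ) + ∫ ω, p * (|X ω| ^ (p-2) * X ω * Y ω) ∂μ :=
    integral_add intXp (intcross.const_mul p)
  have eC : ∫ ω, p * (|X ω| ^ (p-2) * X ω * Y ω) ∂μ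
      = p * ∫ ω, |X ω| ^ (p-2) * X ω * Y ω ∂μ := integral_const_mul _ _
  have eD : ∫ ω, (2:ℝ)^(-p) * |Y ω| ^ p ∂μ
      = (2:ℝ)^(-p) * ∫ ω, |Y ω| ^ p ∂μ := integral_const_mul _ _
  rw [eA, eB, eC, eD, hcross] at hI
  linarith

private lemma ros_step_two {X Y : Ω → ℝ} (hX : Measurable X) (hY : Measurable Y)
    (hmX : MemLp X 2 μ) (hmY : MemLp Y 2 μ)
    (hind : IndepFun X Y μ) (hY0 : ∫ ω, Y ω ∂μ = 0) :
    ∫ ω, (X ω + Y ω)^2 ∂μ = ∫ ω, (X ω)^2 ∂μ + ∫ ω, (Y ω)^2 ∂μ := by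
  have intX : Integrable X μ := hmX.integrable one_le_two
  have intY : Integrable Y μ := hmY.integrable one_le_two
  have intX2 : Integrable (fun ω => (X ω)^2) μ := hmX.integrable_sq
  have intY2 : Integrable (fun ω => (Y ω)^2) μ := hmY.integrable_sq
  have intXY : Integrable (fun ω => X ω * Y ω) μ := by
    have := hind.integrable_mul intX intY
    exact this
  have hXY0 : ∫ ω, X ω * Y ω ∂μ = 0 := by
    have h2 : ∫ ω, X ω * Y ω ∂μ = (∫ ω, X ω ∂μ) * ∫ ω, Y ω ∂μ :=
      hind.integral_mul_eq_mul_integral hX.aestronglyMeasurable hY.aestronglyMeasurable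
    rw [h2, hY0, mul_zero]
  have hpt : ∀ ω, (X ω + Y ω)^2 = (X ω)^2 + 2 * (X ω * Y ω) + (Y ω)^2 := fun ω => by ring
  calc ∫ ω, (X ω + Y ω)^2 ∂μ
      = ∫ ω, ((X ω)^2 + 2 * (X ω * Y ω) + (Y ω)^2) ∂μ := by
        exact integral_congr_ae (Filter.Eventually.of_forall hpt)
    _ = ∫ ω, (X ω)^2 ∂μ + ∫ ω, (Y ω)^2 ∂μ := by
        have eA : ∫ ω, ((X ω)^2 + 2 * (X ω * Y ω) + (Y ω)^2) ∂μ
            = (∫ ω, (X ω)^2 + 2 * (X ω * Y ω) ∂μ) + ∫ ω, (Y ω)^2 ∂μ :=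
          integral_add (intX2.add (intXY.const_mul 2)) intY2
        have eB : ∫ ω, (X ω)^2 + 2 * (X ω * Y ω) ∂μ
            = (∫ ω, (X ω)^2 ∂μ) + ∫ ω, 2 * (X ω * Y ω) ∂μ :=
          integral_add intX2 (intXY.const_mul 2)
        have eC : ∫ ω, 2 * (X ω * Y ω) ∂μ = 2 * ∫ ω, X ω * Y ω ∂μ := integral_const_mul _ _
        rw [eA, eB, eC, hXY0]
        ring

end StepPart

/-- Rosenthal's classical inequality: for `2 ≤ p < ∞` there is a constant `c_p`
depending only on `p` such that for any probability space and any independent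
mean-zero random variables `f_1, …, f_n ∈ L_p`,
`(1/c_p) max { (∑‖f_k‖_p^p)^{1/p}, (∑‖f_k‖_2^2)^{1/2} } ≤ ‖∑ f_k‖_p ≤
 c_p max { (∑‖f_k‖_p^p)^{1/p}, (∑‖f_k‖_2^2)^{1/2} }`. -/
theorem stmt2 (p : ℝ) (hp : 2 ≤ p) :
    ∃ c : ℝ, 0 < c ∧
      ∀ (Ω : Type) (_ : MeasurableSpace Ω) (μ : Measure Ω), IsProbabilityMeasure μ →
        ∀ (n : ℕ) (f : Fin n → Ω → ℝ),
          (∀ k, Measurable (f k)) →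
          iIndepFun f μ →
          (∀ k, MemLp (f k) (ENNReal.ofReal p) μ) →
          (∀ k, ∫ x, f k x ∂μ = 0) →
          (1 / c) *
              max ((∑ k, (eLpNorm (f k) (ENNReal.ofReal p) μ).toReal ^ p) ^ (1 / p))
                ((∑ k, (eLpNorm (f k) 2 μ).toReal ^ (2 : ℝ)) ^ ((1 : ℝ) / 2)) ≤
            (eLpNorm (∑ k, f k) (ENNReal.ofReal p) μ).toReal ∧
          (eLpNorm (∑ k, f k) (ENNReal.ofReal p) μ).toReal ≤
            c *
              max ((∑ k, (eLpNorm (f k) (ENNReal.ofReal p) μ).toReal ^ p) ^ (1 / p))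
                ((∑ k, (eLpNorm (f k) 2 μ).toReal ^ (2 : ℝ)) ^ ((1 : ℝ) / 2)) := by
  classical
  have hp0 : (0:ℝ) < p := by linarith
  have hD1 : (1:ℝ) ≤ (p+1)^p + p^p + p^2 := ros_D_ge hp
  refine ⟨2 * ((p+1)^p + p^p + p^2), by linarith, ?_⟩
  intro Ω mΩ μ hprob n f hmeas hindep hmem hmean
  haveI := hprob
  set D := (p+1)^p + p^p + p^2 with hDdef
  set c := 2 * D with hcdef
  have hc2 : (2:ℝ) ≤ c := by rw [hcdef]; linarith
  have hcpos : (0:ℝ) < c := by linarith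
  -- basic objects
  set P := ENNReal.ofReal p with hPdef
  have h2P : (2 : ENNReal) ≤ P := by
    rw [hPdef, ← ENNReal.ofReal_ofNat]; exact ENNReal.ofReal_le_ofReal hp
  have hSmeas : ∀ s : Finset (Fin n), Measurable (fun ω => ∑ k ∈ s, f k ω) :=
    fun s => Finset.measurable_sum s (fun i _ => hmeas i)
  have hSmem : ∀ s : Finset (Fin n), MemLp (fun ω => ∑ k ∈ s, f k ω) P μ :=
    fun s => memLp_finset_sum s (fun i _ => hmem i)
  have hind_s : ∀ (s : Finset (Fin n)) (i : Fin n), i ∉ s →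
      IndepFun (fun ω => ∑ k ∈ s, f k ω) (f i) μ := by
    intro s i hi
    have h := hindep.indepFun_finsetSum_of_notMem hmeas hi
    rwa [show (∑ j ∈ s, f j) = fun ω => ∑ k ∈ s, f k ω from
      funext fun ω => Finset.sum_apply ω s f] at h
  set T : Finset (Fin n) → ℝ := fun s => ∫ ω, |∑ k ∈ s, f k ω| ^ p ∂μ with hTdef
  have hT0 : ∀ s, 0 ≤ T s :=
    fun s => integral_nonneg fun ω => Real.rpow_nonneg (abs_nonneg _) _
  set V : Fin n → ℝ := fun k => ∫ ω, (f k ω)^2 ∂μ with hVdef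
  set E : Fin n → ℝ := fun k => ∫ ω, |f k ω| ^ p ∂μ with hEdef
  have hV0 : ∀ k, 0 ≤ V k := fun k => integral_nonneg fun ω => sq_nonneg _
  have hE0 : ∀ k, 0 ≤ E k :=
    fun k => integral_nonneg fun ω => Real.rpow_nonneg (abs_nonneg _) _
  have hTins : ∀ (s : Finset (Fin n)) (i : Fin n), i ∉ s →
      T (insert i s) = ∫ ω, |(∑ k ∈ s, f k ω) + f i ω| ^ p ∂μ := by
    intro s i hi
    apply integral_congr_ae
    apply Filter.Eventually.of_forall
    intro ω
    show |∑ k ∈ insert i s, f k ω| ^ p = |(∑ k ∈ s, f k ω) + f i ω| ^ p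
    rw [Finset.sum_insert hi, add_comm]
  set Ap := ∑ k, E k with hApdef
  set σ2 := ∑ k, V k with hσdef
  have hApnn : 0 ≤ Ap := Finset.sum_nonneg fun k _ => hE0 k
  have hσnn : 0 ≤ σ2 := Finset.sum_nonneg fun k _ => hV0 k
  -- lower bound inductions
  have hIndLow : ∀ s : Finset (Fin n), (2:ℝ)^(-p) * ∑ k ∈ s, E k ≤ T s := by
    intro s
    induction s using Finset.induction_on with
    | empty =>
        simp only [Finset.sum_empty, mul_zero]
        exact hT0 ∅
    | insert _ _ hi =>
        rename_i i s ih
        have hstep := ros_step_lower hp (hSmeas s) (hmeas i) (hSmem s) (hmem i)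
          (hind_s s i hi) (hmean i)
        rw [← hTins s i hi] at hstep
        rw [Finset.sum_insert hi, mul_add]
        have h2pn : (0:ℝ) < (2:ℝ)^(-p) := Real.rpow_pos_of_pos (by norm_num) _
        calc (2:ℝ)^(-p) * E i + (2:ℝ)^(-p) * ∑ k ∈ s, E k
            ≤ (2:ℝ)^(-p) * E i + T s := by linarith
          _ ≤ T (insert i s) := by
              have : T s + (2:ℝ)^(-p) * E i ≤ T (insert i s) := hstep
              linarith
  have hIndTwo : ∀ s : Finset (Fin n), ∫ ω, (∑ k ∈ s, f k ω)^2 ∂μ = ∑ k ∈ s, V k := by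
    intro s
    induction s using Finset.induction_on with
    | empty => simp
    | insert _ _ hi =>
        rename_i i s ih
        have hstep := ros_step_two (hSmeas s) (hmeas i)
          ((hSmem s).mono_exponent h2P) ((hmem i).mono_exponent h2P)
          (hind_s s i hi) (hmean i)
        have hre : ∫ ω, (∑ k ∈ insert i s, f k ω)^2 ∂μ
            = ∫ ω, ((∑ k ∈ s, f k ω) + f i ω)^2 ∂μ := by
          apply integral_congr_ae
          apply Filter.Eventually.of_forall
          intro ω
          show (∑ k ∈ insert i s, f k ω)^2 = ((∑ k ∈ s, f k ω) + f i ω)^2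
          rw [Finset.sum_insert hi, add_comm]
        rw [hre, hstep, ih, Finset.sum_insert hi]
        ring
  -- upper bound induction
  have hIndUp : ∀ (W : ℝ), 0 ≤ W → (∀ s, (T s)^(1/p) ≤ W) →
      ∀ s : Finset (Fin n),
        T s ≤ D * (W^(p-2) * ∑ k ∈ s, V k + ∑ k ∈ s, E k) := by
    intro W hW0 hWub s
    induction s using Finset.induction_on with
    | empty =>
        have : T ∅ = 0 := by
          rw [hTdef]
          simp [Real.zero_rpow (ne_of_gt hp0)]
        rw [this]
        simp
    | insert _ _ hi =>
        rename_i i s ih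
        have hstep := ros_step_upper hp (hSmeas s) (hmeas i) (hSmem s) (hmem i)
          (hind_s s i hi) (hmean i)
        rw [← hTins s i hi] at hstep
        have hTW : (T s)^((p-2)/p) ≤ W^(p-2) := by
          have e : (T s)^((p-2)/p) = ((T s)^(1/p))^(p-2) := by
            rw [← Real.rpow_mul (hT0 s)]
            congr 1
            field_simp
          rw [e]
          exact Real.rpow_le_rpow (Real.rpow_nonneg (hT0 s) _) (hWub s) (by linarith)
        have hD0 : (0:ℝ) ≤ D := by linarith
        have hstep2 : T (insert i s) ≤ T s + D * (W^(p-2) * V i + E i) := by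
          have h1 : (T s)^((p-2)/p) * V i ≤ W^(p-2) * V i :=
            mul_le_mul_of_nonneg_right hTW (hV0 i)
          have h2 : D * ((T s)^((p-2)/p) * V i + E i) ≤ D * (W^(p-2) * V i + E i) :=
            mul_le_mul_of_nonneg_left (by linarith) hD0
          calc T (insert i s) ≤ T s + D * ((T s)^((p-2)/p) * V i + E i) := hstep
            _ ≤ T s + D * (W^(p-2) * V i + E i) := by linarith
        calc T (insert i s) ≤ T s + D * (W^(p-2) * V i + E i) := hstep2
          _ ≤ D * (W^(p-2) * ∑ k ∈ s, V k + ∑ k ∈ s, E k)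
              + D * (W^(p-2) * V i + E i) := by linarith
          _ = D * (W^(p-2) * ∑ k ∈ insert i s, V k + ∑ k ∈ insert i s, E k) := by
              rw [Finset.sum_insert hi, Finset.sum_insert hi]
              ring
  -- the sup over all subsets
  have hne : (Finset.univ : Finset (Finset (Fin n))).Nonempty := Finset.univ_nonempty
  obtain ⟨s₀, -, hmax⟩ := Finset.exists_max_image (Finset.univ : Finset (Finset (Fin n)))
    (fun s : Finset (Fin n) => (T s)^(1/p)) hne
  set W := (T s₀)^(1/p) with hWdef
  have hWub : ∀ s, (T s)^(1/p) ≤ W := fun s => hmax s (Finset.mem_univ s)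
  have hW0 : (0:ℝ) ≤ W := Real.rpow_nonneg (hT0 s₀) _
  have hWp : W^p = T s₀ := by
    rw [hWdef, ← Real.rpow_mul (hT0 s₀), show 1/p*p = 1 by field_simp, Real.rpow_one]
  have hDn : (0:ℝ) ≤ D := by linarith
  have hWn2 : (0:ℝ) ≤ W^(p-2) := Real.rpow_nonneg hW0 _
  have hmain : W^p ≤ D * (W^(p-2) * σ2 + Ap) := by
    rw [hWp]
    have h1 := hIndUp W hW0 hWub s₀
    have h2 : ∑ k ∈ s₀, V k ≤ σ2 :=
      Finset.sum_le_sum_of_subset_of_nonneg (Finset.subset_univ _) (fun k _ _ => hV0 k)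
    have h3 : ∑ k ∈ s₀, E k ≤ Ap :=
      Finset.sum_le_sum_of_subset_of_nonneg (Finset.subset_univ _) (fun k _ _ => hE0 k)
    have h4 : W^(p-2) * ∑ k ∈ s₀, V k ≤ W^(p-2) * σ2 :=
      mul_le_mul_of_nonneg_left h2 hWn2
    have h5 : D * (W^(p-2) * ∑ k ∈ s₀, V k + ∑ k ∈ s₀, E k)
        ≤ D * (W^(p-2) * σ2 + Ap) :=
      mul_le_mul_of_nonneg_left (by linarith) hDn
    linarith
  -- solving the inequality for W
  have hWsol : W ≤ c * max (Ap^(1/p)) (σ2^((1:ℝ)/2)) := by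
    have hmaxnn : (0:ℝ) ≤ max (Ap^(1/p)) (σ2^((1:ℝ)/2)) :=
      le_trans (Real.rpow_nonneg hApnn _) (le_max_left _ _)
    by_cases hW00 : W = 0
    · rw [hW00]; positivity
    · have hWpos : (0:ℝ) < W := lt_of_le_of_ne hW0 (Ne.symm hW00)
      by_cases hcase : W^(2:ℝ) ≤ 2*D*σ2
      · have h1 : W = (W^(2:ℝ))^((1:ℝ)/2) := by
          rw [← Real.rpow_mul hW0]; norm_num
        have h2 : (W^(2:ℝ))^((1:ℝ)/2) ≤ (2*D*σ2)^((1:ℝ)/2) :=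
          Real.rpow_le_rpow (Real.rpow_nonneg hW0 _) hcase (by norm_num)
        have h3 : ((2*D*σ2):ℝ)^((1:ℝ)/2) = (2*D)^((1:ℝ)/2) * σ2^((1:ℝ)/2) :=
          Real.mul_rpow (by linarith) hσnn
        have h4 : ((2*D):ℝ)^((1:ℝ)/2) ≤ 2*D := by
          nth_rewrite 2 [← Real.rpow_one (2*D)]
          exact Real.rpow_le_rpow_of_exponent_le (by linarith) (by norm_num)
        have h5 : (0:ℝ) ≤ σ2^((1:ℝ)/2) := Real.rpow_nonneg hσnn _
        calc W = (W^(2:ℝ))^((1:ℝ)/2) := h1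
          _ ≤ (2*D)^((1:ℝ)/2) * σ2^((1:ℝ)/2) := by rw [← h3]; exact h2
          _ ≤ (2*D) * σ2^((1:ℝ)/2) := mul_le_mul_of_nonneg_right h4 h5
          _ ≤ c * max (Ap^(1/p)) (σ2^((1:ℝ)/2)) := by
              rw [hcdef]
              exact mul_le_mul_of_nonneg_left (le_max_right _ _) (by linarith)
      · push_neg at hcase
        have hW2 : W^p = W^(p-2) * W^(2:ℝ) := by
          rw [← Real.rpow_add hWpos]; ring_nf
        have hkey : W^p ≤ 2*D*Ap := by
          have h5 : W^(p-2) * (2*D*σ2) ≤ W^(p-2) * W^(2:ℝ) :=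
            mul_le_mul_of_nonneg_left (le_of_lt hcase) hWn2
          nlinarith [hmain, h5, hW2]
        have h6 : W = (W^p)^(1/p) := by
          rw [← Real.rpow_mul hW0, show p*(1/p) = 1 by field_simp, Real.rpow_one]
        have h7 : (W^p)^(1/p) ≤ ((2*D*Ap):ℝ)^(1/p) :=
          Real.rpow_le_rpow (Real.rpow_nonneg hW0 _) hkey (by positivity)
        have h8 : ((2*D*Ap):ℝ)^(1/p) = (2*D)^(1/p) * Ap^(1/p) :=
          Real.mul_rpow (by linarith) hApnn
        have h9 : ((2*D):ℝ)^(1/p) ≤ 2*D := by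
          nth_rewrite 2 [← Real.rpow_one (2*D)]
          exact Real.rpow_le_rpow_of_exponent_le (by linarith)
            (by rw [div_le_one hp0]; linarith)
        have h10 : (0:ℝ) ≤ Ap^(1/p) := Real.rpow_nonneg hApnn _
        calc W = (W^p)^(1/p) := h6
          _ ≤ (2*D)^(1/p) * Ap^(1/p) := by rw [← h8]; exact h7
          _ ≤ (2*D) * Ap^(1/p) := mul_le_mul_of_nonneg_right h9 h10
          _ ≤ c * max (Ap^(1/p)) (σ2^((1:ℝ)/2)) := by
              rw [hcdef]
              exact mul_le_mul_of_nonneg_left (le_max_left _ _) (by linarith)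
  -- identification of the statement quantities
  have hfuneq : (∑ k, f k) = (fun ω => ∑ k ∈ Finset.univ, f k ω) :=
    funext fun ω => Finset.sum_apply ω Finset.univ f
  have hAid : (∑ k, (eLpNorm (f k) P μ).toReal ^ p) = Ap :=
    Finset.sum_congr rfl (fun k _ => ros_repr_pow hp (hmem k))
  have hBid : (∑ k, (eLpNorm (f k) 2 μ).toReal ^ (2:ℝ)) = σ2 := by
    refine Finset.sum_congr rfl (fun k _ => ?_)
    have h2' : MemLp (f k) (ENNReal.ofReal 2) μ := by
      rw [ENNReal.ofReal_ofNat]; exact (hmem k).mono_exponent h2P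
    have hh := ros_repr_pow (le_refl (2:ℝ)) h2'
    rw [ENNReal.ofReal_ofNat] at hh
    rw [hh, hVdef]
    apply integral_congr_ae
    apply Filter.Eventually.of_forall
    intro ω
    show |f k ω| ^ (2:ℝ) = (f k ω)^2
    rw [Real.rpow_two, sq_abs]
  have hSnorm : (eLpNorm (∑ k, f k) P μ).toReal = (T Finset.univ)^(1/p) := by
    rw [hfuneq]; exact ros_repr hp (hSmem Finset.univ)
  have hTu0 : (0:ℝ) ≤ (T Finset.univ)^(1/p) := Real.rpow_nonneg (hT0 _) _
  -- the two lower bounds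
  have lowerA : Ap^(1/p) ≤ 2 * (T Finset.univ)^(1/p) := by
    have hA := hIndLow Finset.univ
    have hpow : (2:ℝ)^p * (2:ℝ)^(-p) = 1 := by
      rw [← Real.rpow_add (by norm_num : (0:ℝ) < 2)]; simp
    have h2pp : (0:ℝ) ≤ (2:ℝ)^p := Real.rpow_nonneg (by norm_num) _
    have hAle : Ap ≤ (2:ℝ)^p * T Finset.univ := by
      have := mul_le_mul_of_nonneg_left hA h2pp
      calc Ap = ((2:ℝ)^p * (2:ℝ)^(-p)) * Ap := by rw [hpow]; ring
        _ = (2:ℝ)^p * ((2:ℝ)^(-p) * Ap) := by ring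
        _ ≤ (2:ℝ)^p * T Finset.univ := this
    calc Ap^(1/p) ≤ ((2:ℝ)^p * T Finset.univ)^(1/p) :=
          Real.rpow_le_rpow hApnn hAle (by positivity)
      _ = ((2:ℝ)^p)^(1/p) * (T Finset.univ)^(1/p) :=
          Real.mul_rpow h2pp (hT0 _)
      _ = 2 * (T Finset.univ)^(1/p) := by
          rw [← Real.rpow_mul (by norm_num : (0:ℝ) ≤ 2), show p*(1/p) = 1 by field_simp,
            Real.rpow_one]
  have lowerB : σ2^((1:ℝ)/2) ≤ (T Finset.univ)^(1/p) := by
    have hTwo := hIndTwo Finset.univ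
    have hmem2S : MemLp (fun ω => ∑ k ∈ Finset.univ, f k ω) (ENNReal.ofReal 2) μ := by
      rw [ENNReal.ofReal_ofNat]; exact (hSmem Finset.univ).mono_exponent h2P
    have hrepr2 := ros_repr (le_refl (2:ℝ)) hmem2S
    have hint2 : ∫ ω, |∑ k ∈ Finset.univ, f k ω| ^ (2:ℝ) ∂μ = σ2 := by
      rw [hσdef, ← hTwo]
      apply integral_congr_ae
      apply Filter.Eventually.of_forall
      intro ω
      show |∑ k ∈ Finset.univ, f k ω| ^ (2:ℝ) = (∑ k ∈ Finset.univ, f k ω)^2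
      rw [Real.rpow_two, sq_abs]
    rw [hint2] at hrepr2
    have hmono : (eLpNorm (fun ω => ∑ k ∈ Finset.univ, f k ω) (ENNReal.ofReal 2) μ).toReal
        ≤ (eLpNorm (fun ω => ∑ k ∈ Finset.univ, f k ω) P μ).toReal := by
      apply ENNReal.toReal_mono (hSmem Finset.univ).eLpNorm_ne_top
      apply eLpNorm_le_eLpNorm_of_exponent_le _ (hSmeas Finset.univ).aestronglyMeasurable
      rw [ENNReal.ofReal_ofNat]; exact h2P
    have hreprP : (eLpNorm (fun ω => ∑ k ∈ Finset.univ, f k ω) P μ).toReal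
        = (T Finset.univ)^(1/p) := ros_repr hp (hSmem Finset.univ)
    rw [hrepr2, hreprP] at hmono
    exact hmono
  constructor
  · -- lower bound
    rw [hSnorm, hAid, hBid]
    have hmax : max (Ap^(1/p)) (σ2^((1:ℝ)/2)) ≤ c * (T Finset.univ)^(1/p) := by
      apply max_le
      · calc Ap^(1/p) ≤ 2 * (T Finset.univ)^(1/p) := lowerA
          _ ≤ c * (T Finset.univ)^(1/p) := mul_le_mul_of_nonneg_right hc2 hTu0
      · calc σ2^((1:ℝ)/2) ≤ (T Finset.univ)^(1/p) := lowerB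
          _ ≤ c * (T Finset.univ)^(1/p) := by nlinarith
    have := mul_le_mul_of_nonneg_left hmax (by positivity : (0:ℝ) ≤ 1/c)
    calc (1/c) * max (Ap^(1/p)) (σ2^((1:ℝ)/2))
        ≤ (1/c) * (c * (T Finset.univ)^(1/p)) := this
      _ = (T Finset.univ)^(1/p) := by field_simp
  · -- upper bound
    rw [hSnorm, hAid, hBid]
    exact le_trans (hWub Finset.univ) hWsol
end

section
/- Let $H$ be a Hilbert space, $n \ge 1$, and $v_1,\dots,v_n, w_1,\dots,w_n, a_1,\dots,a_n, b_1,\dots,b_n \in B(H)$ with $\|\sum_k v_k v_k^*\| \le 1$ and $\|\sum_k w_k^* w_k\| \le 1$. Then $\|\sum_{k=1}^n v_k a_k b_k w_k\| \le \|\sum_{k=1}^n a_k a_k^*\|^{1/2} \, \|\sum_{k=1}^n b_k^* b_k\|^{1/2}$. -/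
open ContinuousLinearMap RCLike
open scoped InnerProductSpace ComplexInnerProductSpace
set_option maxHeartbeats 1000000

private lemma aux_sum_sq_le {H : Type*} [NormedAddCommGroup H] [InnerProductSpace ℂ H]
    [CompleteSpace H] {n : ℕ} (c : Fin n → H →L[ℂ] H) (x : H) :
    ∑ k, ‖c k x‖ ^ 2 ≤ ‖∑ k, star (c k) * c k‖ * ‖x‖ ^ 2 := by
  have heq : (∑ k, ‖c k x‖ ^ 2 : ℝ) = re (⟪(∑ k, star (c k) * c k) x, x⟫_ℂ) := by
    rw [ContinuousLinearMap.sum_apply, sum_inner, map_sum]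
    refine Finset.sum_congr rfl fun k _ => ?_
    rw [mul_apply_eq_comp, star_eq_adjoint, adjoint_inner_left, inner_self_eq_norm_sq]
  rw [heq]
  calc re (⟪(∑ k, star (c k) * c k) x, x⟫_ℂ)
      ≤ ‖(⟪(∑ k, star (c k) * c k) x, x⟫_ℂ)‖ := RCLike.re_le_norm _
    _ ≤ ‖(∑ k, star (c k) * c k) x‖ * ‖x‖ := norm_inner_le_norm _ _
    _ ≤ (‖∑ k, star (c k) * c k‖ * ‖x‖) * ‖x‖ := by
        exact mul_le_mul_of_nonneg_right (le_opNorm _ _) (norm_nonneg _)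
    _ = ‖∑ k, star (c k) * c k‖ * ‖x‖ ^ 2 := by ring

private lemma aux_key {H : Type*} [NormedAddCommGroup H] [InnerProductSpace ℂ H]
    [CompleteSpace H] {n : ℕ} (v w a b : Fin n → H →L[ℂ] H) {A B : ℝ}
    (hA : 0 ≤ A) (hB : 0 ≤ B)
    (h1 : ∀ y, ∑ k, ‖(star (v k * a k)) y‖ ^ 2 ≤ A * ‖y‖ ^ 2)
    (h2 : ∀ x, ∑ k, ‖(b k * w k) x‖ ^ 2 ≤ B * ‖x‖ ^ 2) :
    ‖∑ k, v k * a k * b k * w k‖ ≤ Real.sqrt A * Real.sqrt B := by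
  refine opNorm_le_bound _ (by positivity) fun x => ?_
  set T := ∑ k, v k * a k * b k * w k with hT
  rcases eq_or_lt_of_le (norm_nonneg (T x)) with h0 | h0
  · rw [← h0]; positivity
  have key : ‖T x‖ ^ 2 ≤ (Real.sqrt B * ‖x‖) * (Real.sqrt A * ‖T x‖) := by
    have e1 : (‖T x‖ ^ 2 : ℝ) = re (⟪T x, T x⟫_ℂ) := (inner_self_eq_norm_sq _).symm
    have e2 : ⟪T x, T x⟫_ℂ = ∑ k, ⟪(b k * w k) x, (star (v k * a k)) (T x)⟫_ℂ := by
      nth_rewrite 1 [hT]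
      rw [ContinuousLinearMap.sum_apply, sum_inner]
      refine Finset.sum_congr rfl fun k _ => ?_
      rw [star_eq_adjoint, adjoint_inner_right]
      rfl
    have e3 : re (⟪T x, T x⟫_ℂ) ≤ ∑ k, ‖(b k * w k) x‖ * ‖(star (v k * a k)) (T x)‖ := by
      rw [e2]
      calc re (∑ k, ⟪(b k * w k) x, (star (v k * a k)) (T x)⟫_ℂ)
          ≤ ‖∑ k, ⟪(b k * w k) x, (star (v k * a k)) (T x)⟫_ℂ‖ := RCLike.re_le_norm _
        _ ≤ ∑ k, ‖⟪(b k * w k) x, (star (v k * a k)) (T x)⟫_ℂ‖ := norm_sum_le _ _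
        _ ≤ ∑ k, ‖(b k * w k) x‖ * ‖(star (v k * a k)) (T x)‖ :=
            Finset.sum_le_sum fun k _ => norm_inner_le_norm _ _
    have e4 : ∑ k, ‖(b k * w k) x‖ * ‖(star (v k * a k)) (T x)‖ ≤
        Real.sqrt (B * ‖x‖ ^ 2) * Real.sqrt (A * ‖T x‖ ^ 2) := by
      have hcs := Finset.sum_mul_sq_le_sq_mul_sq Finset.univ
        (fun k => ‖(b k * w k) x‖) (fun k => ‖(star (v k * a k)) (T x)‖)
      have hnn : (0:ℝ) ≤ ∑ k, ‖(b k * w k) x‖ * ‖(star (v k * a k)) (T x)‖ := by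
        positivity
      calc ∑ k, ‖(b k * w k) x‖ * ‖(star (v k * a k)) (T x)‖
          = Real.sqrt ((∑ k, ‖(b k * w k) x‖ * ‖(star (v k * a k)) (T x)‖) ^ 2) :=
            (Real.sqrt_sq hnn).symm
        _ ≤ Real.sqrt ((∑ k, ‖(b k * w k) x‖ ^ 2) * ∑ k, ‖(star (v k * a k)) (T x)‖ ^ 2) :=
            Real.sqrt_le_sqrt hcs
        _ = Real.sqrt (∑ k, ‖(b k * w k) x‖ ^ 2) *
              Real.sqrt (∑ k, ‖(star (v k * a k)) (T x)‖ ^ 2) := by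
            rw [Real.sqrt_mul (by positivity)]
        _ ≤ Real.sqrt (B * ‖x‖ ^ 2) * Real.sqrt (A * ‖T x‖ ^ 2) := by
            exact mul_le_mul (Real.sqrt_le_sqrt (h2 x)) (Real.sqrt_le_sqrt (h1 (T x)))
              (Real.sqrt_nonneg _) (Real.sqrt_nonneg _)
    rw [e1]
    refine (e3.trans e4).trans (le_of_eq ?_)
    rw [Real.sqrt_mul hB, Real.sqrt_mul hA, Real.sqrt_sq (norm_nonneg _),
      Real.sqrt_sq (norm_nonneg _)]
  have := le_of_mul_le_mul_right (by
    calc ‖T x‖ * ‖T x‖ = ‖T x‖ ^ 2 := (sq ‖T x‖).symm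
      _ ≤ (Real.sqrt B * ‖x‖) * (Real.sqrt A * ‖T x‖) := key
      _ = (Real.sqrt A * Real.sqrt B * ‖x‖) * ‖T x‖ := by ring) h0
  linarith

/-- Operator Cauchy–Schwarz / row–column factorization: for operators on a Hilbert
space with `‖∑ v_k v_k*‖ ≤ 1` and `‖∑ w_k* w_k‖ ≤ 1`,
`‖∑ v_k a_k b_k w_k‖ ≤ ‖∑ v_k a_k a_k* v_k*‖^{1/2} ‖∑ w_k* b_k* b_k w_k‖^{1/2}`
(the exact row–column factorization), and consequently
`‖∑ v_k a_k b_k w_k‖ ≤ ‖∑ a_k a_k*‖^{1/2} ‖∑ b_k* b_k‖^{1/2}`. -/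
theorem stmt17 {H : Type*} [NormedAddCommGroup H] [InnerProductSpace ℂ H]
    [CompleteSpace H] (n : ℕ) (v w a b : Fin n → H →L[ℂ] H)
    (hv : ‖∑ k, v k * star (v k)‖ ≤ 1) (hw : ‖∑ k, star (w k) * w k‖ ≤ 1) :
    ‖∑ k, v k * a k * b k * w k‖ ≤
      Real.sqrt ‖∑ k, v k * a k * star (a k) * star (v k)‖ *
        Real.sqrt ‖∑ k, star (w k) * star (b k) * b k * w k‖ ∧
    ‖∑ k, v k * a k * b k * w k‖ ≤
      Real.sqrt ‖∑ k, a k * star (a k)‖ * Real.sqrt ‖∑ k, star (b k) * b k‖ := by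
  constructor
  · apply aux_key v w a b (norm_nonneg _) (norm_nonneg _)
    · intro y
      have := aux_sum_sq_le (fun k => star (v k * a k)) y
      simpa [star_mul, mul_assoc] using this
    · intro x
      have := aux_sum_sq_le (fun k => b k * w k) x
      simpa [star_mul, mul_assoc] using this
  · apply aux_key v w a b (norm_nonneg _) (norm_nonneg _)
    · intro y
      have hterm : ∀ k, ‖(star (v k * a k)) y‖ ^ 2 ≤
          ‖∑ j, a j * star (a j)‖ * ‖(star (v k)) y‖ ^ 2 := by
        intro k
        have h1 : ‖(star (a k)) ((star (v k)) y)‖ ^ 2 ≤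
            ∑ j, ‖(star (a j)) ((star (v k)) y)‖ ^ 2 :=
          Finset.single_le_sum (f := fun j => ‖(star (a j)) ((star (v k)) y)‖ ^ 2)
            (fun j _ => by positivity) (Finset.mem_univ k)
        have h2 := aux_sum_sq_le (fun j => star (a j)) ((star (v k)) y)
        simp only [star_star] at h2
        have : ‖(star (v k * a k)) y‖ = ‖(star (a k)) ((star (v k)) y)‖ := by
          rw [star_mul]; rfl
        rw [this]
        exact h1.trans h2
      calc ∑ k, ‖(star (v k * a k)) y‖ ^ 2
          ≤ ∑ k, ‖∑ j, a j * star (a j)‖ * ‖(star (v k)) y‖ ^ 2 :=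
            Finset.sum_le_sum fun k _ => hterm k
        _ = ‖∑ j, a j * star (a j)‖ * ∑ k, ‖(star (v k)) y‖ ^ 2 := by
            rw [Finset.mul_sum]
        _ ≤ ‖∑ j, a j * star (a j)‖ * (‖∑ k, v k * star (v k)‖ * ‖y‖ ^ 2) := by
            have h3 := aux_sum_sq_le (fun k => star (v k)) y
            simp only [star_star] at h3
            exact mul_le_mul_of_nonneg_left h3 (norm_nonneg _)
        _ ≤ ‖∑ j, a j * star (a j)‖ * ‖y‖ ^ 2 := by
            have : ‖∑ k, v k * star (v k)‖ * ‖y‖ ^ 2 ≤ 1 * ‖y‖ ^ 2 :=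
              mul_le_mul_of_nonneg_right hv (by positivity)
            nlinarith [norm_nonneg (∑ j, a j * star (a j))]
    · intro x
      have hterm : ∀ k, ‖(b k * w k) x‖ ^ 2 ≤
          ‖∑ j, star (b j) * b j‖ * ‖(w k) x‖ ^ 2 := by
        intro k
        have h1 : ‖(b k) ((w k) x)‖ ^ 2 ≤ ∑ j, ‖(b j) ((w k) x)‖ ^ 2 :=
          Finset.single_le_sum (f := fun j => ‖(b j) ((w k) x)‖ ^ 2)
            (fun j _ => by positivity) (Finset.mem_univ k)
        have h2 := aux_sum_sq_le b ((w k) x)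
        exact h1.trans h2
      calc ∑ k, ‖(b k * w k) x‖ ^ 2
          ≤ ∑ k, ‖∑ j, star (b j) * b j‖ * ‖(w k) x‖ ^ 2 :=
            Finset.sum_le_sum fun k _ => hterm k
        _ = ‖∑ j, star (b j) * b j‖ * ∑ k, ‖(w k) x‖ ^ 2 := by rw [Finset.mul_sum]
        _ ≤ ‖∑ j, star (b j) * b j‖ * (‖∑ k, star (w k) * w k‖ * ‖x‖ ^ 2) :=
            mul_le_mul_of_nonneg_left (aux_sum_sq_le w x) (norm_nonneg _)
        _ ≤ ‖∑ j, star (b j) * b j‖ * ‖x‖ ^ 2 := by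
            have : ‖∑ k, star (w k) * w k‖ * ‖x‖ ^ 2 ≤ 1 * ‖x‖ ^ 2 :=
              mul_le_mul_of_nonneg_right hw (by positivity)
            nlinarith [norm_nonneg (∑ j, star (b j) * b j)]
end
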